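/- Let m, n, d, e be positive integers with d² ∣ m and e² ∣ m·n. If there exists an injective group homomorphism from (ZMod d) × (ZMod (m/d)) into (ZMod e) × (ZMod (m·n/e)), then d divides e, and moreover m divides d·e or e divides d·n. -/

import Mathlib

open Function

/-- Cardinality of the `d`-torsion of `ZMod N`. -/
lemma card_ann (d N : ℕ) (hN : 0 < N) :
    Nat.card {x : ZMod N // d • x = 0} = Nat.gcd N d := by
  haveI : NeZero N := ⟨hN.ne'⟩
  set φ : ZMod N →+ ZMod N := AddMonoidHom.mulLeft (d : ZMod N) with hφ
  have hker : ∀ x : ZMod N, d • x = 0 ↔ x ∈ φ.ker := by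
    intro x
    simp [hφ, AddMonoidHom.mem_ker, nsmul_eq_mul]
  have h1 : Nat.card {x : ZMod N // d • x = 0} = Nat.card φ.ker := by
    apply Nat.card_congr
    exact Equiv.subtypeEquivRight hker
  have hrange : φ.range = AddSubgroup.zmultiples (d : ZMod N) := by
    ext x
    constructor
    · rintro ⟨y, rfl⟩
      exact ⟨(y.val : ℤ), by
        push_cast
        simp [hφ, zsmul_eq_mul, ZMod.natCast_val, ZMod.cast_id, mul_comm]⟩
    · rintro ⟨k, rfl⟩
      exact ⟨(k : ZMod N), by simp [hφ, zsmul_eq_mul, mul_comm]⟩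
  have hcardrange : Nat.card φ.range = N / N.gcd d := by
    rw [hrange, Nat.card_zmultiples, ZMod.addOrderOf_coe _ hN.ne']
  have htot : Nat.card (ZMod N) = Nat.card (ZMod N ⧸ φ.ker) * Nat.card φ.ker :=
    AddSubgroup.card_eq_card_quotient_mul_card_addSubgroup φ.ker
  have hquot : Nat.card (ZMod N ⧸ φ.ker) = Nat.card φ.range :=
    Nat.card_congr (QuotientAddGroup.quotientKerEquivRange φ).toEquiv
  rw [Nat.card_zmod, hquot, hcardrange] at htot
  have hgdvd : N.gcd d ∣ N := Nat.gcd_dvd_left _ _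
  have hgpos : 0 < N.gcd d := Nat.gcd_pos_of_pos_left _ hN
  have hdivpos : 0 < N / N.gcd d := Nat.div_pos (Nat.le_of_dvd hN hgdvd) hgpos
  rw [h1]
  have : (N / N.gcd d) * Nat.card φ.ker = (N / N.gcd d) * N.gcd d := by
    rw [← htot, Nat.div_mul_cancel hgdvd]
  exact Nat.eq_of_mul_eq_mul_left hdivpos this

theorem dvd_of_injective_hom (m n d e : ℕ) (hm : 0 < m) (hn : 0 < n)
    (hd : 0 < d) (he : 0 < e) (hdm : d ^ 2 ∣ m) (hem : e ^ 2 ∣ m * n)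
    (h : ∃ f : (ZMod d × ZMod (m / d)) →+ (ZMod e × ZMod (m * n / e)),
      Function.Injective f) :
    d ∣ e ∧ (m ∣ d * e ∨ e ∣ d * n) := by
  obtain ⟨f, hf⟩ := h
  have hdm' : d ∣ m := (dvd_pow_self d two_ne_zero).trans hdm |>.trans dvd_rfl
  have hdm1 : d ∣ m := dvd_trans (dvd_pow_self d two_ne_zero) hdm
  have hem1 : e ∣ m * n := dvd_trans (dvd_pow_self e two_ne_zero) hem
  have hmd_pos : 0 < m / d := Nat.div_pos (Nat.le_of_dvd hm hdm1) hd
  have hmne_pos : 0 < m * n / e := Nat.div_pos (Nat.le_of_dvd (by positivity) hem1) he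
  haveI : NeZero d := ⟨hd.ne'⟩
  haveI : NeZero e := ⟨he.ne'⟩
  haveI : NeZero (m / d) := ⟨hmd_pos.ne'⟩
  haveI : NeZero (m * n / e) := ⟨hmne_pos.ne'⟩
  -- d divides m / d, and e divides m * n / e
  have hddvd : d ∣ m / d := by
    rw [Nat.dvd_div_iff_mul_dvd hdm1, ← pow_two]; exact hdm
  have hedvd : e ∣ m * n / e := by
    rw [Nat.dvd_div_iff_mul_dvd hem1, ← pow_two]; exact hem
  -- Part 2: exponent argument.  (0,1) has additive order m/d.
  have hord1 : addOrderOf ((0, 1) : ZMod d × ZMod (m / d)) = m / d := by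
    rw [Prod.addOrderOf, addOrderOf_zero, ZMod.addOrderOf_one, Nat.lcm_one_left]
  have hkill : (m * n / e) • (f (0, 1)) = 0 := by
    have h1 : ∀ x : ZMod e, (m * n / e) • x = 0 := by
      intro x
      obtain ⟨k, hk⟩ := hedvd
      rw [hk, mul_comm, mul_smul]
      simp [nsmul_eq_mul]
    have h2 : ∀ x : ZMod (m * n / e), (m * n / e) • x = 0 := by
      intro x
      simp [nsmul_eq_mul]
    ext
    · exact h1 _
    · exact h2 _
  have hexp : m / d ∣ m * n / e := by
    rw [← hord1, ← addOrderOf_injective f hf (0, 1)]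
    exact addOrderOf_dvd_of_nsmul_eq_zero hkill
  have hedn : e ∣ d * n := by
    obtain ⟨k, hk⟩ := hexp
    obtain ⟨m', hm'⟩ := hdm1
    have hmd : m / d = m' := by rw [hm', Nat.mul_div_cancel_left _ hd]
    have hmne : (m * n / e) * e = m * n := Nat.div_mul_cancel hem1
    have key : m' * (d * n) = m' * (k * e) := by
      have : m * n = m' * k * e := by
        rw [← hmne, hk, hmd]
      rw [hm'] at this
      ring_nf
      ring_nf at this
      linarith [this]
    have hm'pos : 0 < m' := by
      rw [← hmd]; exact hmd_pos
    have := Nat.eq_of_mul_eq_mul_left hm'pos key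
    exact Dvd.intro k (by rw [this, mul_comm])
  -- Part 1: d ∣ e via torsion counting.
  -- Build injective hom ι : ZMod d →+ ZMod (m / d)
  have hkey : d • (((m / d) / d : ℕ) : ZMod (m / d)) = 0 := by
    rw [nsmul_eq_mul, ← Nat.cast_mul, Nat.mul_div_cancel' hddvd, ZMod.natCast_self]
  set a : ZMod (m / d) := (((m / d) / d : ℕ) : ZMod (m / d)) with ha
  have haord : addOrderOf a = d := by
    rw [ha, ZMod.addOrderOf_coe _ hmd_pos.ne']
    have hdvd2 : (m / d) / d ∣ m / d := Nat.div_dvd_of_dvd hddvd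
    rw [Nat.gcd_eq_right hdvd2, Nat.div_div_self hddvd hmd_pos.ne']
  set F : ℤ →+ ZMod (m / d) := zmultiplesHom (ZMod (m / d)) a with hF
  have hFd : F d = 0 := by
    simp only [hF, zmultiplesHom_apply]
    rw [natCast_zsmul]
    exact hkey
  set ι : ZMod d →+ ZMod (m / d) := ZMod.lift d ⟨F, hFd⟩ with hι
  have hιinj : Function.Injective ι := by
    rw [hι, ZMod.lift_injective]
    intro k hk
    simp only [hF, zmultiplesHom_apply] at hk
    have : (addOrderOf a : ℤ) ∣ k := addOrderOf_dvd_iff_zsmul_eq_zero.mpr hk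
    rw [haord] at this
    exact (ZMod.intCast_zmod_eq_zero_iff_dvd k d).mpr this
  -- g : ZMod d × ZMod d →+ target, injective
  set g : (ZMod d × ZMod d) →+ (ZMod e × ZMod (m * n / e)) :=
    f.comp ((AddMonoidHom.id (ZMod d)).prodMap ι) with hg
  have hginj : Function.Injective g := by
    apply hf.comp
    exact Function.Injective.prodMap Function.injective_id hιinj
  -- image is d-torsion
  have hgtors : ∀ z : ZMod d × ZMod d, d • g z = 0 := by
    intro z
    rw [← map_nsmul]
    have : d • z = 0 := by
      ext
      · simp [nsmul_eq_mul]
      · simp [nsmul_eq_mul]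
    rw [this, map_zero]
  -- injection into product of torsion subtypes
  set T := ({x : ZMod e // d • x = 0} × {y : ZMod (m * n / e) // d • y = 0})
  have hT : Function.Injective (fun z : ZMod d × ZMod d =>
      ((⟨(g z).1, by have := hgtors z; rw [Prod.ext_iff] at this; exact this.1⟩,
        ⟨(g z).2, by have := hgtors z; rw [Prod.ext_iff] at this; exact this.2⟩) : T)) := by
    intro z w hzw
    apply hginj
    simp only [Prod.mk.injEq, Subtype.mk.injEq] at hzw
    exact Prod.ext hzw.1 hzw.2
  have hcard := Nat.card_le_card_of_injective _ hT
  rw [Nat.card_prod, Nat.card_prod, Nat.card_zmod,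
    card_ann d e he, card_ann d (m * n / e) hmne_pos] at hcard
  have hge : Nat.gcd e d ∣ d := Nat.gcd_dvd_right _ _
  have hg2 : Nat.gcd (m * n / e) d ≤ d := Nat.le_of_dvd hd (Nat.gcd_dvd_right _ _)
  have hdle : d ≤ Nat.gcd e d := by
    by_contra hlt
    push_neg at hlt
    have h1 : Nat.gcd e d * Nat.gcd (m * n / e) d < d * d := by
      calc Nat.gcd e d * Nat.gcd (m * n / e) d ≤ Nat.gcd e d * d :=
            Nat.mul_le_mul_left _ hg2
        _ < d * d := Nat.mul_lt_mul_of_lt_of_le hlt le_rfl hd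
    omega
  have : Nat.gcd e d = d := Nat.le_antisymm (Nat.le_of_dvd hd hge) hdle
  exact ⟨this ▸ Nat.gcd_dvd_left e d, Or.inr hedn⟩
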